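/- Let θ and v̂ be positive real numbers with v̂ < η. If θ < max{1, 1/(η − v̂)}, then the set of irrational ξ with v̂_{b,A}(ξ) ≥ v̂ and v_{b,A}(ξ) = θ·v̂ is empty. -/

import Mathlib

open Filter MeasureTheory Set

/-- Distance to the nearest integer. -/
noncomputable def dni (x : ℝ) : ℝ := |x - round x|

/-- Asymptotic approximation exponent `v_{b,A}(ξ)` (valued in `EReal`). -/
noncomputable def vbA (b : ℕ) (a : ℕ → ℕ) (ξ : ℝ) : EReal :=
  sSup ((fun v : ℝ => (v : EReal)) ''
    {v : ℝ | 0 ≤ v ∧ ∃ᶠ n in atTop, 1 ≤ n ∧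
      dni ((b : ℝ) ^ (a n) * ξ) < (b : ℝ) ^ (-(a n : ℝ) * v)})

/-- Uniform approximation exponent `v̂_{b,A}(ξ)` (valued in `EReal`). -/
noncomputable def vhatbA (b : ℕ) (a : ℕ → ℕ) (ξ : ℝ) : EReal :=
  sSup ((fun v : ℝ => (v : EReal)) ''
    {v : ℝ | 0 ≤ v ∧ ∀ᶠ N in atTop, ∃ n, 1 ≤ n ∧ n ≤ N ∧
      dni ((b : ℝ) ^ (a n) * ξ) < (b : ℝ) ^ (-(a N : ℝ) * v)})


lemma dni_pos {x : ℝ} (hx : Irrational x) : 0 < dni x := by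
  rw [dni, abs_pos, sub_ne_zero]
  exact hx.ne_int _

lemma dni_le_half (x : ℝ) : dni x ≤ 1 / 2 := abs_sub_round x

lemma irr_aux {b : ℕ} (hb : 2 ≤ b) (k : ℕ) {ξ : ℝ} (hξ : Irrational ξ) :
    Irrational ((b : ℝ) ^ k * ξ) := by
  have h : ((b ^ k : ℕ) : ℝ) = (b : ℝ) ^ k := by push_cast; ring
  rw [← h]
  exact hξ.natCast_mul (pow_ne_zero _ (by omega))

lemma sep {b : ℕ} (hb : 2 ≤ b) {ξ : ℝ} (hξ : Irrational ξ) {A B : ℕ} (hAB : A < B)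
    (hlt : dni ((b : ℝ) ^ B * ξ) < dni ((b : ℝ) ^ A * ξ)) :
    (b : ℝ) ^ ((A : ℝ) - B - 1) ≤ dni ((b : ℝ) ^ A * ξ) := by
  have hb0 : (0 : ℝ) < b := by positivity
  have hb2 : (2 : ℝ) ≤ b := by exact_mod_cast hb
  set p : ℤ := round ((b : ℝ) ^ A * ξ) with hp
  set q : ℤ := round ((b : ℝ) ^ B * ξ) with hq
  set d : ℕ := B - A with hd
  have hd1 : 1 ≤ d := by omega
  have hpow : (b : ℝ) ^ B = (b : ℝ) ^ d * (b : ℝ) ^ A := by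
    rw [← pow_add]; congr 1; omega
  have key : (b : ℝ) ^ B * ξ - q = (b : ℝ) ^ d * ((b : ℝ) ^ A * ξ - p) + ((b : ℝ) ^ d * p - q) := by
    rw [hpow]; ring
  have hrApos : 0 < dni ((b : ℝ) ^ A * ξ) := dni_pos (irr_aux hb A hξ)
  have hbd2 : (2 : ℝ) ≤ (b : ℝ) ^ d := by
    calc (2:ℝ) ≤ (b:ℝ) := hb2
    _ = (b:ℝ)^1 := (pow_one _).symm
    _ ≤ (b:ℝ)^d := pow_le_pow_right₀ (by linarith) hd1
  set E : ℤ := b ^ d * p - q with hE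
  rcases eq_or_ne E 0 with h0 | h0
  · exfalso
    have hEq : ((b : ℝ) ^ d * p - q : ℝ) = 0 := by
      have h' : ((b ^ d * p - q : ℤ) : ℝ) = 0 := by rw [← hE, h0]; simp
      push_cast at h'
      linarith
    have : dni ((b : ℝ) ^ B * ξ) = (b : ℝ) ^ d * dni ((b : ℝ) ^ A * ξ) := by
      rw [dni, dni, ← hq, ← hp]
      rw [show (b : ℝ) ^ B * ξ - q = (b : ℝ) ^ d * ((b : ℝ) ^ A * ξ - p) by
        rw [key, hEq]; ring]
      rw [abs_mul, abs_of_pos (by positivity)]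
    nlinarith
  · have h1E : (1 : ℝ) ≤ |(E : ℝ)| := by
      have := Int.one_le_abs h0
      calc (1:ℝ) ≤ (|E| : ℤ) := by exact_mod_cast this
      _ = |(E : ℝ)| := by push_cast; ring
    have hEval : ((E : ℤ) : ℝ) = (b : ℝ) ^ d * p - q := by rw [hE]; push_cast; ring
    have habs : |(E : ℝ)| ≤ (b : ℝ) ^ d * dni ((b : ℝ) ^ A * ξ) + dni ((b : ℝ) ^ B * ξ) := by
      rw [hEval]
      have : (b : ℝ) ^ d * p - q = ((b : ℝ) ^ B * ξ - q) - (b : ℝ) ^ d * ((b : ℝ) ^ A * ξ - p) := by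
        rw [key]; ring
      rw [this]
      calc |((b : ℝ) ^ B * ξ - q) - (b : ℝ) ^ d * ((b : ℝ) ^ A * ξ - p)|
          ≤ |(b : ℝ) ^ B * ξ - q| + |(b : ℝ) ^ d * ((b : ℝ) ^ A * ξ - p)| := abs_sub _ _
        _ = dni ((b : ℝ) ^ B * ξ) + (b : ℝ) ^ d * dni ((b : ℝ) ^ A * ξ) := by
            rw [dni, dni, ← hq, ← hp, abs_mul, abs_of_pos (show (0:ℝ) < (b:ℝ)^d by positivity)]
        _ = _ := by ring
    have hhalf : dni ((b : ℝ) ^ B * ξ) ≤ 1 / 2 := dni_le_half _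
    have hstep : 1 / 2 ≤ (b : ℝ) ^ d * dni ((b : ℝ) ^ A * ξ) := by linarith
    have hcast : (b : ℝ) ^ ((A : ℝ) - B - 1) = ((b : ℝ) ^ (d + 1 : ℕ))⁻¹ := by
      have he : (A : ℝ) - B - 1 = -((d + 1 : ℕ) : ℝ) := by
        have : (d : ℝ) = (B : ℝ) - A := by
          rw [hd]; push_cast [Nat.cast_sub hAB.le]; ring
        push_cast [this]; ring
      rw [he, Real.rpow_neg hb0.le, Real.rpow_natCast]
    rw [hcast]
    rw [inv_le_iff_one_le_mul₀ (by positivity)]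
    have : (b : ℝ) ^ (d + 1 : ℕ) = (b : ℝ) * (b : ℝ) ^ d := by ring
    rw [this]
    nlinarith

lemma core {b : ℕ} (hb : 2 ≤ b) {a : ℕ → ℕ} (ha : StrictMono a) (hpos : ∀ n, 1 ≤ a n)
    {ξ : ℝ} (hξ : Irrational ξ) {w' t : ℝ} (hw' : 0 < w')
    (hunif : ∀ᶠ N in atTop, ∃ n, 1 ≤ n ∧ n ≤ N ∧
      dni ((b : ℝ) ^ (a n) * ξ) < (b : ℝ) ^ (-(a N : ℝ) * w'))
    (hrat : ∀ᶠ m in atTop, ((a (m + 1) : ℝ)) < t * (a m : ℝ)) (M : ℕ) :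
    ∃ n, M ≤ n ∧ 1 ≤ n ∧ ∃ s : ℕ, a n ≤ s ∧ ((a n : ℝ) - 1 < (s : ℝ) * (t - w')) ∧
      dni ((b : ℝ) ^ (a n) * ξ) < (b : ℝ) ^ (-(s : ℝ) * w') := by
  classical
  set r : ℕ → ℝ := fun n => dni ((b : ℝ) ^ (a n) * ξ) with hrdef
  have hb1 : (1 : ℝ) < b := by exact_mod_cast (show 1 < b by omega)
  have hb0 : (0 : ℝ) < b := by linarith
  have hrpos : ∀ n, 0 < r n := fun n => dni_pos (irr_aux hb (a n) hξ)
  obtain ⟨N₀, hN₀⟩ := eventually_atTop.1 hunif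
  obtain ⟨M₁, hM₁⟩ := eventually_atTop.1 hrat
  -- smallness
  have hsmall : ∀ ρ : ℝ, 0 < ρ → ∃ K₀ : ℕ, ∀ N ≥ K₀, (b : ℝ) ^ (-(a N : ℝ) * w') < ρ := by
    intro ρ hρ
    have hlt1 : (b : ℝ) ^ (-w') < 1 := Real.rpow_lt_one_of_one_lt_of_neg hb1 (by linarith)
    obtain ⟨K, hK⟩ := exists_pow_lt_of_lt_one hρ hlt1
    refine ⟨K, fun N hN => ?_⟩
    have hKa : (K : ℝ) ≤ (a N : ℝ) := by
      exact_mod_cast le_trans hN (ha.le_apply)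
    have h1 : ((b : ℝ) ^ (-w')) ^ K = (b : ℝ) ^ (-(K : ℝ) * w') := by
      rw [← Real.rpow_natCast ((b : ℝ) ^ (-w')) K, ← Real.rpow_mul hb0.le]
      ring_nf
    calc (b : ℝ) ^ (-(a N : ℝ) * w') ≤ (b : ℝ) ^ (-(K : ℝ) * w') := by
          apply (Real.rpow_le_rpow_left_iff hb1).2
          nlinarith
      _ < ρ := by rw [← h1]; exact hK
  -- choose N
  set Q : Finset ℕ := Finset.Icc 1 (max M 1) with hQ
  have hQne : Q.Nonempty := ⟨1, by rw [hQ, Finset.mem_Icc]; omega⟩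
  set ρ : ℝ := Q.inf' hQne r with hρdef
  have hρpos : 0 < ρ := by
    rw [hρdef, Finset.lt_inf'_iff]
    exact fun j _ => hrpos j
  obtain ⟨K₀, hK₀⟩ := hsmall ρ hρpos
  set N : ℕ := max (max K₀ N₀) (max M₁ (max M 1)) with hN
  have hNN₀ : N₀ ≤ N := by omega
  have hN1 : 1 ≤ N := by omega
  -- argmin over Icc 1 N
  obtain ⟨n, hnmem, hnmin⟩ := Finset.exists_min_image (Finset.Icc 1 N) r
    ⟨1, by simp [Finset.mem_Icc]; omega⟩
  rw [Finset.mem_Icc] at hnmem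
  -- r n is small
  obtain ⟨j, hj1, hjN, hjval⟩ := hN₀ N hNN₀
  have hrn_small : r n < (b : ℝ) ^ (-(a N : ℝ) * w') :=
    lt_of_le_of_lt (hnmin j (Finset.mem_Icc.2 ⟨hj1, hjN⟩)) hjval
  have hrnρ : r n < ρ := lt_trans hrn_small (hK₀ N (by omega))
  have hnM : max M 1 < n := by
    by_contra hcon
    push_neg at hcon
    have : n ∈ Q := by rw [hQ, Finset.mem_Icc]; exact ⟨hnmem.1, hcon⟩
    have := Finset.inf'_le r this
    rw [← hρdef] at this
    linarith
  -- find N'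
  set P : ℕ → Prop := fun K => N < K ∧ ∃ j, 1 ≤ j ∧ j ≤ K ∧ r j < r n with hP
  have hPex : ∃ K, P K := by
    obtain ⟨K₁, hK₁⟩ := hsmall (r n) (hrpos n)
    set K := max (N + 1) (max K₁ N₀) with hK
    obtain ⟨j, hj1, hjK, hjval⟩ := hN₀ K (by omega)
    exact ⟨K, by omega, j, hj1, hjK, lt_trans hjval (hK₁ K (by omega))⟩
  set N' : ℕ := Nat.find hPex with hN'def
  obtain ⟨hNN', n', hn'1, hn'N', hn'val⟩ := Nat.find_spec hPex
  have hminN' : ∀ j, 1 ≤ j → j ≤ N' - 1 → r n ≤ r j := by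
    intro j hj1 hjle
    by_contra hcon
    push_neg at hcon
    rcases le_or_gt j N with hjN | hjN
    · exact absurd (hnmin j (Finset.mem_Icc.2 ⟨hj1, hjN⟩)) (not_le.2 hcon)
    · have hPj : P j := ⟨hjN, j, hj1, le_refl j, hcon⟩
      exact Nat.find_min hPex (show j < N' by omega) hPj
  -- uniform at N' - 1
  obtain ⟨j₀, hj₀1, hj₀le, hj₀val⟩ := hN₀ (N' - 1) (by omega)
  have hrn : r n < (b : ℝ) ^ (-(a (N' - 1) : ℝ) * w') :=
    lt_of_le_of_lt (hminN' j₀ hj₀1 hj₀le) hj₀val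
  -- n' > N
  have hn'N : N < n' := by
    by_contra hcon
    push_neg at hcon
    exact absurd (hnmin n' (Finset.mem_Icc.2 ⟨hn'1, hcon⟩)) (not_le.2 hn'val)
  have hnn' : n < n' := lt_of_le_of_lt hnmem.2 hn'N
  -- separation
  have hsep := sep hb hξ (ha hnn') hn'val
  -- exponent comparison
  have hexp : (a n : ℝ) - (a n' : ℝ) - 1 < -(a (N' - 1) : ℝ) * w' := by
    have := lt_of_le_of_lt hsep hrn
    exact (Real.rpow_lt_rpow_left_iff hb1).1 this
  -- ratio at N' - 1
  have hratN' : (a N' : ℝ) < t * (a (N' - 1) : ℝ) := by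
    have h := hM₁ (N' - 1) (by omega)
    have : N' - 1 + 1 = N' := by omega
    rwa [this] at h
  have han' : (a n' : ℝ) ≤ (a N' : ℝ) := by exact_mod_cast ha.monotone hn'N'
  refine ⟨n, by omega, hnmem.1, a (N' - 1), ha.monotone (by omega), ?_, hrn⟩
  nlinarith [hexp, hratN', han']

set_option maxHeartbeats 2000000 in
theorem stmt4 (b : ℕ) (hb : 2 ≤ b) (a : ℕ → ℕ) (ha : StrictMono a)
    (hpos : ∀ n, 1 ≤ a n) (η : ℝ)
    (hbdd : BddAbove (Set.range fun n => (a (n + 1) : ℝ) / (a n : ℝ)))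
    (hη : Filter.limsup (fun n => (a (n + 1) : ℝ) / (a n : ℝ)) atTop = η)
    (θ w : ℝ) (hθ : 0 < θ) (hw : 0 < w) (hwη : w < η)
    (hθlt : θ < max 1 (1 / (η - w))) :
    {ξ : ℝ | Irrational ξ ∧ (w : EReal) ≤ vhatbA b a ξ ∧
      vbA b a ξ = ((θ * w : ℝ) : EReal)} = ∅ := by
  ext ξ
  simp only [mem_setOf_eq, mem_empty_iff_false, iff_false, not_and]
  intro hξ h1 h2
  have hb1 : (1 : ℝ) < b := by exact_mod_cast (show 1 < b by omega)
  have hηw : 0 < η - w := by linarith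
  -- F2
  have F2 : ∀ c : ℝ, 0 ≤ c →
      (∃ᶠ n in atTop, 1 ≤ n ∧ dni ((b : ℝ) ^ (a n) * ξ) < (b : ℝ) ^ (-(a n : ℝ) * c)) →
      c ≤ θ * w := by
    intro c hc hf
    have hle : (c : EReal) ≤ ((θ * w : ℝ) : EReal) := by
      rw [← h2]
      exact le_sSup ⟨c, ⟨hc, hf⟩, rfl⟩
    exact_mod_cast hle
  -- F3
  have F3 : ∀ L : ℝ, L < w → ∃ w' : ℝ, L < w' ∧ 0 ≤ w' ∧
      ∀ᶠ N in atTop, ∃ n, 1 ≤ n ∧ n ≤ N ∧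
        dni ((b : ℝ) ^ (a n) * ξ) < (b : ℝ) ^ (-(a N : ℝ) * w') := by
    intro L hL
    have hlt : (L : EReal) < vhatbA b a ξ :=
      lt_of_lt_of_le (by exact_mod_cast hL) h1
    rw [vhatbA, lt_sSup_iff] at hlt
    obtain ⟨x, ⟨w', ⟨hw0, hu⟩, rfl⟩, hLx⟩ := hlt
    refine ⟨w', ?_, hw0, hu⟩
    have hLx' : (L : EReal) < (w' : EReal) := by simpa using hLx
    exact_mod_cast hLx'
  -- F4
  have hbound : IsBoundedUnder (· ≤ ·) atTop (fun n => (a (n + 1) : ℝ) / (a n : ℝ)) := by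
    obtain ⟨C, hC⟩ := hbdd
    exact ⟨C, eventually_map.2 (Eventually.of_forall fun n => hC ⟨n, rfl⟩)⟩
  have F4 : ∀ ε : ℝ, 0 < ε → ∀ᶠ m in atTop, ((a (m + 1) : ℝ)) < (η + ε) * (a m : ℝ) := by
    intro ε hε
    have h := Filter.eventually_lt_of_limsup_lt (by rw [hη]; linarith : 
      Filter.limsup (fun n => (a (n + 1) : ℝ) / (a n : ℝ)) atTop < η + ε) hbound
    filter_upwards [h] with m hm
    have hm0 : (0 : ℝ) < (a m : ℝ) := by exact_mod_cast hpos m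
    rw [div_lt_iff₀ hm0] at hm
    linarith [hm]
  -- Claim A : w ≤ θ * w
  have hA : w ≤ θ * w := by
    by_contra hcon
    push_neg at hcon
    set c := (θ * w + w) / 2 with hcdef
    have hθw0 : 0 < θ * w := mul_pos hθ hw
    have hc0 : 0 ≤ c := by rw [hcdef]; linarith
    have hcw : c < w := by rw [hcdef]; linarith
    clear_value c
    obtain ⟨w', hw'c, hw'0, hu⟩ := F3 c hcw
    have hfreq : ∃ᶠ n in atTop, 1 ≤ n ∧
        dni ((b : ℝ) ^ (a n) * ξ) < (b : ℝ) ^ (-(a n : ℝ) * c) := by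
      rw [frequently_atTop]
      intro M
      obtain ⟨n, hMn, hn1, s, hs1, _, hs3⟩ :=
        core hb ha hpos hξ (lt_of_le_of_lt hc0 hw'c) hu (F4 1 one_pos) M
      refine ⟨n, hMn, hn1, lt_of_lt_of_le hs3 ((Real.rpow_le_rpow_left_iff hb1).2 ?_)⟩
      have hcast : (a n : ℝ) ≤ (s : ℝ) := by exact_mod_cast hs1
      have hann : (0 : ℝ) ≤ (a n : ℝ) := Nat.cast_nonneg _
      nlinarith [mul_le_mul hcast hw'c.le hc0 (le_trans hann hcast)]
    linarith [F2 c hc0 hfreq]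
  -- Claim B : w / (η - w) ≤ θ * w
  have hB : w / (η - w) ≤ θ * w := by
    by_contra hcon
    push_neg at hcon
    set c := (θ * w + w / (η - w)) / 2 with hcdef
    have hθw0 : 0 < θ * w := mul_pos hθ hw
    have hc0 : 0 ≤ c := by rw [hcdef]; positivity
    have hcgt : θ * w < c := by rw [hcdef]; linarith
    have hclt : c < w / (η - w) := by rw [hcdef]; linarith
    have hkey : c * (η - w) < w := by
      have := (lt_div_iff₀ hηw).1 hclt
      linarith
    have hclear : True := trivial
    clear_value c
    have hG0 : 0 < (w - c * (η - w)) / 2 := by linarith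
    set G := (w - c * (η - w)) / 2 with hGdef
    have hG : 0 < G := hG0
    have hGexp : w - c * (η - w) = 2 * G := by rw [hGdef]; ring
    clear_value G
    set δ := min (w / 2) (G / (1 + 2 * c)) with hδdef
    have h12c : 0 < 1 + 2 * c := by linarith
    have hδpos : 0 < δ := lt_min (by linarith) (by positivity)
    have hδ1 : δ ≤ w / 2 := min_le_left _ _
    have hδ2 : δ * (1 + 2 * c) ≤ G := by
      have h := min_le_right (w / 2) (G / (1 + 2 * c))
      calc δ * (1 + 2 * c) ≤ (G / (1 + 2 * c)) * (1 + 2 * c) := by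
            apply mul_le_mul_of_nonneg_right _ h12c.le
            rw [hδdef]; exact h
        _ = G := by field_simp
    clear_value δ
    obtain ⟨w', hw'L, hw'0, hu⟩ := F3 (w - δ) (by linarith)
    have hw'pos : 0 < w' := by linarith
    obtain ⟨A₀, hA₀⟩ := exists_nat_ge (w / G)
    have hfreq : ∃ᶠ n in atTop, 1 ≤ n ∧
        dni ((b : ℝ) ^ (a n) * ξ) < (b : ℝ) ^ (-(a n : ℝ) * c) := by
      rw [frequently_atTop]
      intro M
      obtain ⟨n, hMn, hn1, s, hs1, hs2, hs3⟩ :=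
        core hb ha hpos hξ hw'pos hu (F4 δ hδpos) (max M A₀)
      have hnA₀ : A₀ ≤ n := le_trans (le_max_right M A₀) hMn
      have han : (A₀ : ℝ) ≤ (a n : ℝ) := by
        exact_mod_cast le_trans hnA₀ ha.le_apply
      have hanG : w ≤ (a n : ℝ) * G := by
        have h1' : w / G ≤ (a n : ℝ) := le_trans hA₀ han
        calc w = (w / G) * G := by field_simp
          _ ≤ (a n : ℝ) * G := mul_le_mul_of_nonneg_right h1' hG.le
      have han1 : (1 : ℝ) ≤ (a n : ℝ) := by exact_mod_cast hpos n
      have hsnn : (0 : ℝ) ≤ (s : ℝ) := Nat.cast_nonneg _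
      refine ⟨n, le_trans (le_max_left M A₀) hMn, hn1,
        lt_of_lt_of_le hs3 ((Real.rpow_le_rpow_left_iff hb1).2 ?_)⟩
      -- need : -(s) * w' ≤ -(a n) * c, i.e. c * a n ≤ w' * s
      have hgoal : c * (a n : ℝ) ≤ w' * (s : ℝ) := by
        rcases le_or_gt (η + δ - w') 0 with hcase | hcase
        · exfalso
          nlinarith [hs2, hsnn, han1, mul_nonpos_of_nonneg_of_nonpos hsnn hcase]
        · have e1 : (0 : ℝ) ≤ ((a n : ℝ) * (1 + c) - 1) * (w' - (w - δ)) := by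
            apply mul_nonneg
            · nlinarith
            · linarith
          have e2a : (0 : ℝ) ≤ (a n : ℝ) * (G - δ * (1 + 2 * c)) :=
            mul_nonneg (by linarith) (by linarith)
          have e2 : (0 : ℝ) ≤ (a n : ℝ) * ((w - c * (η - w)) - δ * (1 + 2 * c)) - w + δ := by
            nlinarith [e2a, hanG, hδpos, hGexp]
          have key0 : w' ≤ (a n : ℝ) * ((1 + c) * w' - c * (η + δ)) := by
            nlinarith [e1, e2]
          have key1 : c * (a n : ℝ) * (η + δ - w') ≤ w' * ((a n : ℝ) - 1) := by
            nlinarith [key0]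
          have h3 : w' * ((a n : ℝ) - 1) < (w' * (s : ℝ)) * (η + δ - w') := by
            nlinarith [mul_lt_mul_of_pos_left hs2 hw'pos]
          nlinarith [key1, h3, hcase]
      nlinarith [hgoal]
    linarith [F2 c hc0 hfreq]
  -- conclude
  have hθ1 : (1 : ℝ) ≤ θ := by nlinarith [hA]
  have hθ2 : 1 / (η - w) ≤ θ := by
    rw [div_le_iff₀ hηw]
    have hB2 : w ≤ θ * w * (η - w) := by
      have := (div_le_iff₀ hηw).1 hB
      linarith
    nlinarith [hB2]
  have : max 1 (1 / (η - w)) ≤ θ := max_le hθ1 hθ2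
  linarith
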